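/- arXiv:1811.05548 — 3 statements merged into one kernel-verified Lean document; each statement's English description precedes it below -/
import Mathlib

section
/- Strong masking simulation is transitive in the following sense: if A ≼_m A' witnessed by relation M1 and A' ≼_m A'' witnessed by relation M2, where the fault set F' of A' is contained in the fault set F'' of A'' and faults of A' are masked in A (i.e., condition B.3 holds for M1 over F' and for M2 over F''), then the composition M1 ∘ M2 is a strong masking simulation witnessing A ≼_m A''. -/
/-- A labelled transition system with state type `S`, label type `L`. -/
structure TS (S L : Type) where
  step : S → L → S → Prop
  init : S

/-- Strong masking simulation between a nominal system `A` (over `Σ = L \ F`)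
and an implementation `A'` (over `Σ ∪ F`), where the nominal system is
augmented with masking self-loops (so the mask-move condition B.3 asks for a
state `t` with `s →M t`, i.e. `t = s`, related to `t'`). -/
def IsMaskingSim {S S' L : Type} (A : TS S L) (A' : TS S' L) (F : Set L)
    (M : S → S' → Prop) : Prop :=
  M A.init A'.init ∧
  ∀ s s', M s s' →
    (∀ e, e ∉ F → ∀ t, A.step s e t → ∃ t', A'.step s' e t' ∧ M t t') ∧
    (∀ e, e ∉ F → ∀ t', A'.step s' e t' → ∃ t, A.step s e t ∧ M t t') ∧
    (∀ f, f ∈ F → ∀ t', A'.step s' f t' → ∃ t, t = s ∧ M t t')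

/-- strong masking simulation is transitive: if `M1` witnesses
`A ≼_m A'` (fault set `F'`) and `M2` witnesses `A' ≼_m A''` (fault set `F''`),
with `F' ⊆ F''`, then the relational composition `M1 ∘ M2` witnesses
`A ≼_m A''`. -/
theorem masking_sim_comp {S S' S'' L : Type} (A : TS S L) (A' : TS S' L)
    (A'' : TS S'' L) (F' F'' : Set L) (hF : F' ⊆ F'')
    (M1 : S → S' → Prop) (M2 : S' → S'' → Prop)
    (h1 : IsMaskingSim A A' F' M1) (h2 : IsMaskingSim A' A'' F'' M2) :
    IsMaskingSim A A'' F'' (Relation.Comp M1 M2) := by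
  obtain ⟨hi1, hs1⟩ := h1
  obtain ⟨hi2, hs2⟩ := h2
  refine ⟨⟨A'.init, hi1, hi2⟩, ?_⟩
  rintro s s'' ⟨s', hm1, hm2⟩
  refine ⟨?_, ?_, ?_⟩
  · intro e he t ht
    obtain ⟨t', ht', hmt'⟩ := (hs1 s s' hm1).1 e (fun h => he (hF h)) t ht
    obtain ⟨t'', ht'', hmt''⟩ := (hs2 s' s'' hm2).1 e he t' ht'
    exact ⟨t'', ht'', t', hmt', hmt''⟩
  · intro e he t'' ht''
    obtain ⟨t', ht', hmt'⟩ := (hs2 s' s'' hm2).2.1 e he t'' ht''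
    obtain ⟨t, ht, hmt⟩ := (hs1 s s' hm1).2.1 e (fun h => he (hF h)) t' ht'
    exact ⟨t, ht, t', hmt, hmt'⟩
  · intro f hf t'' ht''
    obtain ⟨t', rfl, hmt''⟩ := (hs2 s' s'' hm2).2.2 f hf t'' ht''
    exact ⟨s, rfl, t', hm1, hmt''⟩
end

section
/- In the strong masking game, the verifier has a winning strategy (avoiding the error state forever) if and only if there exists a strong masking simulation between A and A', i.e., A ≼_m A'. -/
/-- States of the (strong) masking game graph: refuter states `(s, #, s', R)`,
verifier states `(s, σ^i, s', V)` (the `Bool` is `true` for side 1, i.e. a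
pending label coming from the nominal system `A`, and `false` for side 2),
and the error state. -/
inductive GS (S S' L : Type) : Type where
  | R : S → S' → GS S S' L
  | V : S → L → Bool → S' → GS S S' L
  | err : GS S S' L

/-- Basic edges of the masking game graph for nominal `A`, implementation `A'`,
fault labels `F` and masking label `m`. -/
inductive GEdge {S S' L : Type} (A : TS S L) (A' : TS S' L) (F : Set L) (m : L) :
    GS S S' L → L → GS S S' L → Prop where
  | chA {s s' σ t} : σ ∉ F → σ ≠ m → A.step s σ t →
      GEdge A A' F m (.R s s') σ (.V t σ true s')
  | chA' {s s' σ t'} : σ ≠ m → A'.step s' σ t' →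
      GEdge A A' F m (.R s s') σ (.V s σ false t')
  | matchA' {s σ s' t'} : σ ∉ F → σ ≠ m → A'.step s' σ t' →
      GEdge A A' F m (.V s σ true s') σ (.R s t')
  | matchA {s σ s' t} : σ ∉ F → σ ≠ m → A.step s σ t →
      GEdge A A' F m (.V s σ false s') σ (.R t s')
  | mask {s σ s'} : σ ∈ F →
      GEdge A A' F m (.V s σ false s') m (.R s s')

/-- Full edge relation of the masking game graph: basic edges, plus, for any
state with no outgoing basic edge (in particular the error state), edges
labelled by any `σ ∈ Σ` to the error state. -/
def fullEdge {S S' L : Type} (A : TS S L) (A' : TS S' L) (F : Set L) (m : L)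
    (v : GS S S' L) (σ : L) (w : GS S S' L) : Prop :=
  GEdge A A' F m v σ w ∨
    ((∀ l u, ¬ GEdge A A' F m v l u) ∧ σ ∉ F ∧ σ ≠ m ∧ w = GS.err)

/-- `true` on refuter states (including the error state). -/
def isRefB {S S' L : Type} : GS S S' L → Bool
  | .V _ _ _ _ => false
  | _ => true

/-- A verifier node whose pending label is a fault. -/
def isFaultV {S S' L : Type} (F : Set L) : GS S S' L → Prop
  | .V _ σ _ _ => σ ∈ F
  | _ => False

/-- The fault-stratified attractor sets `U^j_i` (first index `j`, second `i`):
`U^0_i = U^j_0 = ∅`, `U^1_1 = {err}`, and `U^{j+2}_{i+1}` collects refuter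
nodes with a successor in `U^{j+1}_{i+1}`, non-fault verifier nodes all of
whose successors are in `∪_{j'≤j+1} U^{j'}_{i+1}` with one in `U^{j+1}_{i+1}`,
and fault verifier nodes all of whose successors are in
`∪_{i'≤i, j'≤j+1} U^{j'}_{i'}` with one in `U^{j+1}_i`. -/
def Uset {α : Type} (post : α → Set α) (isRef isFault : α → Prop) (verr : α) :
    ℕ → ℕ → Set α
  | 0, _ => ∅
  | 1, i => if i = 1 then {verr} else ∅
  | _+2, 0 => ∅
  | j+2, i+1 =>
      {v | isRef v ∧ ∃ w ∈ post v, w ∈ Uset post isRef isFault verr (j+1) (i+1)} ∪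
      {v | ¬ isRef v ∧ ¬ isFault v ∧
            (∀ w ∈ post v, ∃ j' : Fin (j+2), w ∈ Uset post isRef isFault verr j' (i+1)) ∧
            ∃ w ∈ post v, w ∈ Uset post isRef isFault verr (j+1) (i+1)} ∪
      {v | ¬ isRef v ∧ isFault v ∧
            (∀ w ∈ post v, ∃ i' : Fin (i+1), ∃ j' : Fin (j+2),
              w ∈ Uset post isRef isFault verr j' i') ∧
            ∃ w ∈ post v, w ∈ Uset post isRef isFault verr (j+1) i}
  termination_by j _ => j
  decreasing_by all_goals first | exact j'.isLt | omega

/-- The sets `U^j_i` instantiated on the masking game graph of `A`, `A'`. -/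
def UsetG {S S' L : Type} (A : TS S L) (A' : TS S' L) (F : Set L) (m : L) :
    ℕ → ℕ → Set (GS S S' L) :=
  Uset (fun v => {w | ∃ l, fullEdge A A' F m v l w})
    (fun v => isRefB v = true) (isFaultV F) GS.err

/-- History-dependent strategies: given the history and the current state,
choose a label and a next state. -/
abbrev Strat (α L : Type) := List (α × L) → α → L × α

/-- The history (sequence of state/label pairs) of a play up to step `n`. -/
def hist {α L : Type} (ρ : ℕ → α) (σ : ℕ → L) (n : ℕ) : List (α × L) :=
  (List.range n).map fun k => (ρ k, σ k)

/-- `ρ, σ` form an (infinite) play of the graph `E` from `v0`. -/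
def IsPlay {α L : Type} (E : α → L → α → Prop) (v0 : α) (ρ : ℕ → α) (σ : ℕ → L) : Prop :=
  ρ 0 = v0 ∧ ∀ n, E (ρ n) (σ n) (ρ (n+1))

/-- The play `ρ, σ` conforms to the strategy `π` of the player owning the
states where `isRef · = mine`. -/
def Conf {α L : Type} (isRef : α → Bool) (mine : Bool) (π : Strat α L)
    (ρ : ℕ → α) (σ : ℕ → L) : Prop :=
  ∀ n, isRef (ρ n) = mine → (σ n, ρ (n+1)) = π (hist ρ σ n) (ρ n)

/-- Conformance to a memoryless (positional) strategy `f`. -/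
def MemConf {α L : Type} (isRef : α → Bool) (mine : Bool) (f : α → L × α)
    (ρ : ℕ → α) (σ : ℕ → L) : Prop :=
  ∀ n, isRef (ρ n) = mine → (σ n, ρ (n+1)) = f (ρ n)

/-- Auxiliary construction of the outcome of two strategies: history and
current state after `n` steps. -/
def outAux {α L : Type} (isRef : α → Bool) (πR πV : Strat α L) (v0 : α) :
    ℕ → List (α × L) × α
  | 0 => ([], v0)
  | n+1 =>
      let p := outAux isRef πR πV v0 n
      let c := if isRef p.2 then πR p.1 p.2 else πV p.1 p.2
      (p.1 ++ [(p.2, c.1)], c.2)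

/-- State sequence of the outcome `out(πR, πV)`. -/
def outSt {α L : Type} (isRef : α → Bool) (πR πV : Strat α L) (v0 : α) (n : ℕ) : α :=
  (outAux isRef πR πV v0 n).2

/-- Label sequence of the outcome `out(πR, πV)`. -/
def outLb {α L : Type} (isRef : α → Bool) (πR πV : Strat α L) (v0 : α) (n : ℕ) : L :=
  (if isRef (outSt isRef πR πV v0 n)
    then πR (outAux isRef πR πV v0 n).1 (outSt isRef πR πV v0 n)
    else πV (outAux isRef πR πV v0 n).1 (outSt isRef πR πV v0 n)).1

open Classical in
/-- The masking payoff `f_m(ρ) = lim_n pr1(v_n) / (1 + Σ_{i≤n} pr0(v_i))`,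
where `v_n = (χ_F(σ_n), χ_{err}(ρ_{n+1}))`. -/
noncomputable def payoff {α L : Type} (F : Set L) (verr : α)
    (ρ : ℕ → α) (σ : ℕ → L) : ℝ :=
  Filter.limUnder Filter.atTop fun n =>
    (if ρ (n+1) = verr then (1:ℝ) else 0) /
      (1 + ∑ i ∈ Finset.range (n+1), (if σ i ∈ F then (1:ℝ) else 0))

/-- Refuter strategies (valid at refuter nodes). -/
abbrev RStrat {S S' L : Type} (A : TS S L) (A' : TS S' L) (F : Set L) (m : L) :=
  {π : Strat (GS S S' L) L //
    ∀ h v, isRefB v = true → fullEdge A A' F m v (π h v).1 (π h v).2}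

/-- Verifier strategies (valid at verifier nodes). -/
abbrev VStrat {S S' L : Type} (A : TS S L) (A' : TS S' L) (F : Set L) (m : L) :=
  {π : Strat (GS S S' L) L //
    ∀ h v, isRefB v = false → fullEdge A A' F m v (π h v).1 (π h v).2}

/-- The value of the quantitative masking game (the masking distance
`δ_m(A, A')`): sup over refuter strategies of the inf over verifier
strategies of the payoff of the outcome play. -/
noncomputable def maskingValue {S S' L : Type} (A : TS S L) (A' : TS S' L)
    (F : Set L) (m : L) : ℝ :=
  ⨆ πR : RStrat A A' F m, ⨅ πV : VStrat A A' F m,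
    payoff F GS.err
      (outSt isRefB πR.1 πV.1 (GS.R A.init A'.init))
      (outLb isRefB πR.1 πV.1 (GS.R A.init A'.init))

/-! ### Auxiliary definitions and lemmas -/

section MaskingAux

variable {S S' L : Type} (A : TS S L) (A' : TS S' L) (F : Set L) (m : L)

open Classical in
/-- Invariant on game states induced by a masking simulation `M`. -/
def GInv (M : S → S' → Prop) : GS S S' L → Prop
  | .R s s' => M s s'
  | .V t σ true s' => σ ∉ F ∧ σ ≠ m ∧ ∃ t', A'.step s' σ t' ∧ M t t'
  | .V s σ false t' =>
      (σ ∈ F → M s t') ∧ (σ ∉ F → σ ≠ m ∧ ∃ t, A.step s σ t ∧ M t t')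
  | .err => False

open Classical in
/-- A memoryless verifier move keeping the invariant when possible. -/
noncomputable def vMove (Inv : GS S S' L → Prop) (σ₀ : L) (v : GS S S' L) :
    L × GS S S' L :=
  if h : ∃ p : L × GS S S' L, GEdge A A' F m v p.1 p.2 ∧ Inv p.2 then h.choose
  else if h2 : ∃ p : L × GS S S' L, GEdge A A' F m v p.1 p.2 then h2.choose
  else (σ₀, GS.err)

lemma vMove_edge (Inv : GS S S' L → Prop) {σ₀ : L} (hσF : σ₀ ∉ F) (hσm : σ₀ ≠ m)
    (v : GS S S' L) :
    fullEdge A A' F m v (vMove A A' F m Inv σ₀ v).1 (vMove A A' F m Inv σ₀ v).2 := by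
  unfold vMove
  split_ifs with h h2
  · exact Or.inl h.choose_spec.1
  · exact Or.inl h2.choose_spec
  · exact Or.inr ⟨fun l u hu => h2 ⟨(l, u), hu⟩, hσF, hσm, rfl⟩

lemma vMove_inv (Inv : GS S S' L → Prop) (σ₀ : L) {v : GS S S' L}
    (h : ∃ p : L × GS S S' L, GEdge A A' F m v p.1 p.2 ∧ Inv p.2) :
    Inv (vMove A A' F m Inv σ₀ v).2 := by
  unfold vMove
  rw [dif_pos h]
  exact h.choose_spec.2

/-- Finite conform play prefixes for a verifier strategy `π`. -/
def PlayPrefix (π : Strat (GS S S' L) L) (n : ℕ) (ρ : ℕ → GS S S' L) (σ : ℕ → L) :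
    Prop :=
  ρ 0 = GS.R A.init A'.init ∧
  ∀ k < n, fullEdge A A' F m (ρ k) (σ k) (ρ (k + 1)) ∧
    (isRefB (ρ k) = false → (σ k, ρ (k + 1)) = π (hist ρ σ k) (ρ k))

open Classical in
/-- An arbitrary valid move from any game state. -/
noncomputable def anyMove (σ₀ : L) (v : GS S S' L) : L × GS S S' L :=
  if h : ∃ p : L × GS S S' L, fullEdge A A' F m v p.1 p.2 then h.choose
  else (σ₀, GS.err)

lemma anyMove_spec {σ₀ : L} (hσF : σ₀ ∉ F) (hσm : σ₀ ≠ m) (v : GS S S' L) :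
    fullEdge A A' F m v (anyMove A A' F m σ₀ v).1 (anyMove A A' F m σ₀ v).2 := by
  unfold anyMove
  split_ifs with h
  · exact h.choose_spec
  · refine Or.inr ⟨fun l u hu => h ⟨(l, u), Or.inl hu⟩, hσF, hσm, rfl⟩

/-- The move used when extending a play: the verifier follows `π`, the refuter
moves arbitrarily. -/
noncomputable def mvc (π : Strat (GS S S' L) L) (σ₀ : L)
    (p : List (GS S S' L × L) × GS S S' L) : L × GS S S' L :=
  if isRefB p.2 = true then anyMove A A' F m σ₀ p.2 else π p.1 p.2

/-- Forward play builder from a given history and state. -/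
noncomputable def bld (π : Strat (GS S S' L) L) (σ₀ : L)
    (h0 : List (GS S S' L × L)) (v : GS S S' L) :
    ℕ → List (GS S S' L × L) × GS S S' L
  | 0 => (h0, v)
  | n + 1 =>
      let p := bld π σ₀ h0 v n
      (p.1 ++ [(p.2, (mvc A A' F m π σ₀ p).1)], (mvc A A' F m π σ₀ p).2)

lemma hist_succ {α L : Type} (ρ : ℕ → α) (σ : ℕ → L) (n : ℕ) :
    hist ρ σ (n + 1) = hist ρ σ n ++ [(ρ n, σ n)] := by
  simp [hist, List.range_succ]

lemma hist_congr {α L : Type} {ρ ρ' : ℕ → α} {σ σ' : ℕ → L} {n : ℕ}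
    (h1 : ∀ k < n, ρ k = ρ' k) (h2 : ∀ k < n, σ k = σ' k) :
    hist ρ σ n = hist ρ' σ' n := by
  unfold hist
  refine List.map_congr_left fun k hk => ?_
  rw [List.mem_range] at hk
  rw [h1 k hk, h2 k hk]

lemma mvc_edge (π : Strat (GS S S' L) L)
    (hval : ∀ h v, isRefB v = false → fullEdge A A' F m v (π h v).1 (π h v).2)
    {σ₀ : L} (hσF : σ₀ ∉ F) (hσm : σ₀ ≠ m) (p : List (GS S S' L × L) × GS S S' L) :
    fullEdge A A' F m p.2 (mvc A A' F m π σ₀ p).1 (mvc A A' F m π σ₀ p).2 := by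
  unfold mvc
  by_cases h : isRefB p.2 = true
  · rw [if_pos h]; exact anyMove_spec A A' F m hσF hσm p.2
  · rw [if_neg h]; exact hval p.1 p.2 (by simpa using h)

/-- Every finite conform prefix extends to an infinite conform play. -/
lemma prefix_extend (π : Strat (GS S S' L) L)
    (hval : ∀ h v, isRefB v = false → fullEdge A A' F m v (π h v).1 (π h v).2)
    {σ₀ : L} (hσF : σ₀ ∉ F) (hσm : σ₀ ≠ m)
    {n : ℕ} {ρ : ℕ → GS S S' L} {σ : ℕ → L}
    (hp : PlayPrefix A A' F m π n ρ σ) :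
    ∃ ρ' σ', IsPlay (fullEdge A A' F m) (GS.R A.init A'.init) ρ' σ' ∧
      Conf isRefB false π ρ' σ' ∧ ∀ k ≤ n, ρ' k = ρ k := by
  classical
  set B : ℕ → List (GS S S' L × L) × GS S S' L :=
    bld A A' F m π σ₀ (hist ρ σ n) (ρ n) with hB
  set ρ' : ℕ → GS S S' L := fun k => if k ≤ n then ρ k else (B (k - n)).2 with hρ'
  set σ' : ℕ → L :=
    fun k => if k < n then σ k else (mvc A A' F m π σ₀ (B (k - n))).1 with hσ'
  have hρ'le : ∀ k ≤ n, ρ' k = ρ k := fun k hk => if_pos hk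
  have hσ'lt : ∀ k < n, σ' k = σ k := fun k hk => if_pos hk
  have hρ'st : ∀ j, ρ' (n + j) = (B j).2 := by
    intro j
    cases j with
    | zero => simp [ρ', hB, bld]
    | succ j =>
        show (if n + (j + 1) ≤ n then ρ (n + (j + 1)) else (B (n + (j + 1) - n)).2) = _
        rw [if_neg (show ¬(n + (j + 1) ≤ n) by omega),
          show n + (j + 1) - n = j + 1 by omega]
  have hσ'lb : ∀ j, σ' (n + j) = (mvc A A' F m π σ₀ (B j)).1 := by
    intro j
    show (if n + j < n then σ (n + j) else (mvc A A' F m π σ₀ (B (n + j - n))).1) = _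
    rw [if_neg (show ¬(n + j < n) by omega), show n + j - n = j by omega]
  have hhist : ∀ k ≤ n, hist ρ' σ' k = hist ρ σ k := by
    intro k hk
    exact hist_congr (fun j hj => (hρ'le j (by omega)).symm)
      (fun j hj => (hσ'lt j (by omega)).symm) |>.symm
  have hBfst : ∀ j, (B j).1 = hist ρ' σ' (n + j) := by
    intro j
    induction j with
    | zero =>
        show (hist ρ σ n) = hist ρ' σ' (n + 0)
        rw [Nat.add_zero, hhist n le_rfl]
    | succ j ih =>
        show (B j).1 ++ [((B j).2, (mvc A A' F m π σ₀ (B j)).1)] = _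
        rw [show n + (j + 1) = (n + j) + 1 by omega, hist_succ, ih,
          ← hρ'st j, ← hσ'lb j]
  have hB2succ : ∀ j, (B (j + 1)).2 = (mvc A A' F m π σ₀ (B j)).2 := fun j => rfl
  refine ⟨ρ', σ', ⟨?_, ?_⟩, ?_, hρ'le⟩
  · rw [hρ'le 0 (Nat.zero_le n), hp.1]
  · intro k
    by_cases hk : k < n
    · rw [hρ'le k (by omega), hσ'lt k hk, hρ'le (k + 1) (by omega)]
      exact (hp.2 k hk).1
    · have hkn : k = n + (k - n) := by omega
      rw [hkn, hρ'st, hσ'lb, show n + (k - n) + 1 = n + (k - n + 1) by omega,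
        hρ'st, hB2succ]
      exact mvc_edge A A' F m π hval hσF hσm (B (k - n))
  · intro k hrk
    by_cases hk : k < n
    · rw [hρ'le k (by omega)] at hrk ⊢
      rw [hσ'lt k hk, hρ'le (k + 1) (by omega), hhist k (by omega)]
      exact (hp.2 k hk).2 hrk
    · have hkn : k = n + (k - n) := by omega
      rw [hkn, hρ'st] at hrk
      rw [hkn, hρ'st, hσ'lb, show n + (k - n) + 1 = n + (k - n + 1) by omega,
        hρ'st, hB2succ, ← hBfst]
      unfold mvc
      rw [if_neg (show ¬(isRefB (B (k - n)).2 = true) by simp [hrk])]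
  
/-- Extending a conform prefix by one step. -/
lemma prefix_step (π : Strat (GS S S' L) L)
    {n : ℕ} {ρ : ℕ → GS S S' L} {σ : ℕ → L}
    (hp : PlayPrefix A A' F m π n ρ σ) {l : L} {w : GS S S' L}
    (he : fullEdge A A' F m (ρ n) l w)
    (hc : isRefB (ρ n) = false → (l, w) = π (hist ρ σ n) (ρ n)) :
    ∃ ρ' σ', PlayPrefix A A' F m π (n + 1) ρ' σ' ∧ ρ' (n + 1) = w ∧ ρ' n = ρ n := by
  classical
  refine ⟨Function.update ρ (n + 1) w, Function.update σ n l, ⟨?_, ?_⟩, ?_, ?_⟩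
  · rw [Function.update_of_ne (by omega), hp.1]
  · intro k hk
    have hρeq : ∀ j ≤ n, Function.update ρ (n + 1) w j = ρ j := fun j hj =>
      Function.update_of_ne (by omega) _ _
    have hσeq : ∀ j < n, Function.update σ n l j = σ j := fun j hj =>
      Function.update_of_ne (by omega) _ _
    by_cases hkn : k < n
    · rw [hρeq k (by omega), hσeq k hkn, hρeq (k + 1) (by omega)]
      have hh : hist (Function.update ρ (n + 1) w) (Function.update σ n l) k
          = hist ρ σ k :=
        hist_congr (fun j hj => hρeq j (by omega)) (fun j hj => hσeq j (by omega))
      rw [hh]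
      exact hp.2 k hkn
    · have hkeq : k = n := by omega
      rw [hkeq, hρeq n le_rfl, Function.update_self, Function.update_self]
      have hh : hist (Function.update ρ (n + 1) w) (Function.update σ n l) n
          = hist ρ σ n :=
        hist_congr (fun j hj => hρeq j (by omega)) (fun j hj => hσeq j hj)
      rw [hh]
      exact ⟨he, hc⟩
  · exact Function.update_self _ _ _
  · exact Function.update_of_ne (by omega) _ _

end MaskingAux


/-- in the strong masking game the verifier has a winning
strategy (avoiding the error state forever) iff there is a strong masking
simulation between `A` and `A'`, i.e. `A ≼_m A'`. (As in the paper, every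
state of `A` and `A'` has a successor, `A` is over `Σ`, and `A'` is over
`Σ ∪ F`; `m` is the fresh masking label.) -/
theorem masking_game_verifier_iff_sim {S S' L : Type}
    (A : TS S L) (A' : TS S' L) (F : Set L) (m : L) (hm : m ∉ F)
    (hA : ∀ s, ∃ e t, A.step s e t)
    (hA' : ∀ s', ∃ e t', A'.step s' e t')
    (hSA : ∀ s e t, A.step s e t → e ∉ F ∧ e ≠ m)
    (hSA' : ∀ s' e t', A'.step s' e t' → e ≠ m) :
    (∃ π : VStrat A A' F m,
        ∀ ρ σ, IsPlay (fullEdge A A' F m) (GS.R A.init A'.init) ρ σ →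
          Conf isRefB false π.1 ρ σ → ∀ n, ρ n ≠ GS.err) ↔
      ∃ M : S → S' → Prop, IsMaskingSim A A' F M := by
  classical
  obtain ⟨e₀, t₀, he₀⟩ := hA A.init
  obtain ⟨hσF, hσm⟩ := hSA _ _ _ he₀
  constructor
  · rintro ⟨π, hwin⟩
    set Mrel : S → S' → Prop := fun s s' =>
      ∃ ρ σ n, PlayPrefix A A' F m π.1 n ρ σ ∧ ρ n = GS.R s s' with hMrel
    have safe : ∀ {n : ℕ} {ρ : ℕ → GS S S' L} {σ : ℕ → L},
        PlayPrefix A A' F m π.1 n ρ σ → ρ n ≠ GS.err := by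
      intro n ρ σ hp
      obtain ⟨ρ', σ', hpl, hcf, hagree⟩ := prefix_extend A A' F m π.1 π.2 hσF hσm hp
      have := hwin ρ' σ' hpl hcf n
      rwa [hagree n le_rfl] at this
    have respond : ∀ {s s'}, Mrel s s' → ∀ {l w}, GEdge A A' F m (GS.R s s') l w →
        ∃ l₂ u, GEdge A A' F m w l₂ u ∧ ∀ t t'', u = GS.R t t'' → Mrel t t'' := by
      intro s s' hM l w hge
      obtain ⟨ρ, σ, n, hp, hn⟩ := hM
      obtain ⟨ρ₁, σ₁, hp₁, hend₁, -⟩ := prefix_step A A' F m π.1 hp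
        (by rw [hn]; exact Or.inl hge)
        (by rw [hn]; intro h; simp [isRefB] at h)
      have hrw : isRefB w = false := by cases hge <;> rfl
      set c := π.1 (hist ρ₁ σ₁ (n + 1)) (ρ₁ (n + 1)) with hc
      have hedge : fullEdge A A' F m (ρ₁ (n + 1)) c.1 c.2 :=
        π.2 _ _ (by rw [hend₁]; exact hrw)
      obtain ⟨ρ₂, σ₂, hp₂, hend₂, hmid₂⟩ := prefix_step A A' F m π.1 hp₁ hedge
        (fun _ => rfl)
      have hu : c.2 ≠ GS.err := by
        have := safe hp₂; rwa [hend₂] at this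
      have hbasic : GEdge A A' F m (ρ₁ (n + 1)) c.1 c.2 := by
        rcases hedge with h | ⟨-, -, -, herr⟩
        · exact h
        · exact absurd herr hu
      rw [hend₁] at hbasic
      exact ⟨c.1, c.2, hbasic, fun t t'' hu' =>
        ⟨ρ₂, σ₂, n + 1 + 1, hp₂, by rw [hend₂, hu']⟩⟩
    refine ⟨Mrel, ⟨fun _ => GS.R A.init A'.init, fun _ => e₀, 0,
      ⟨rfl, fun k hk => absurd hk (Nat.not_lt_zero k)⟩, rfl⟩, ?_⟩
    intro s s' hM
    refine ⟨?_, ?_, ?_⟩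
    · intro e he t ht
      obtain ⟨he1, he2⟩ := hSA s e t ht
      obtain ⟨l₂, u, hg, hMu⟩ := respond hM (GEdge.chA he1 he2 ht)
      cases hg with
      | matchA' h1 h2 hst => exact ⟨_, hst, hMu _ _ rfl⟩
    · intro e he t' ht'
      have he2 := hSA' s' e t' ht'
      obtain ⟨l₂, u, hg, hMu⟩ := respond hM (GEdge.chA' he2 ht')
      cases hg with
      | matchA h1 h2 hst => exact ⟨_, hst, hMu _ _ rfl⟩
      | mask hF => exact absurd hF he
    · intro f hf t' ht'
      have he2 := hSA' s' f t' ht'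
      obtain ⟨l₂, u, hg, hMu⟩ := respond hM (GEdge.chA' he2 ht')
      cases hg with
      | matchA h1 h2 hst => exact absurd hf h1
      | mask hF => exact ⟨s, rfl, hMu _ _ rfl⟩
  · rintro ⟨M, hM0, hMsim⟩
    refine ⟨⟨fun _ v => vMove A A' F m (GInv A A' F m M) e₀ v,
      fun h v _ => vMove_edge A A' F m (GInv A A' F m M) hσF hσm v⟩, ?_⟩
    intro ρ σ hpl hcf
    have key : ∀ n, GInv A A' F m M (ρ n) := by
      intro n
      induction n with
      | zero => rw [hpl.1]; exact hM0
      | succ n ih =>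
        have hedge := hpl.2 n
        cases hρn : ρ n with
        | R s s' =>
          rw [hρn] at ih hedge
          simp only [GInv] at ih
          obtain ⟨w, hw⟩ : ∃ w, ρ (n + 1) = w := ⟨_, rfl⟩
          rw [hw] at hedge ⊢
          rcases hedge with hg | ⟨hno, -, -, herr⟩
          · cases hg with
            | chA h1 h2 ht =>
              exact ⟨h1, h2, (hMsim s s' ih).1 _ h1 _ ht⟩
            | chA' h2 ht' =>
              refine ⟨fun hF => ?_, fun hF => ⟨h2, (hMsim s s' ih).2.1 _ hF _ ht'⟩⟩
              obtain ⟨t, rfl, hMt⟩ := (hMsim s s' ih).2.2 _ hF _ ht'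
              exact hMt
          · obtain ⟨e, t, ht⟩ := hA s
            obtain ⟨h1, h2⟩ := hSA s e t ht
            exact absurd (GEdge.chA (s' := s') h1 h2 ht) (hno _ _)
        | V s σl b s' =>
          rw [hρn] at ih
          have hcn := hcf n (by rw [hρn]; rfl)
          have hnext : ρ (n + 1) = (vMove A A' F m (GInv A A' F m M) e₀ (ρ n)).2 :=
            congrArg Prod.snd hcn
          rw [hρn] at hnext
          have hex : ∃ p : L × GS S S' L,
              GEdge A A' F m (GS.V s σl b s') p.1 p.2 ∧ GInv A A' F m M p.2 := by
            cases b with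
            | true =>
              obtain ⟨h1, h2, t', ht', hMt⟩ := ih
              exact ⟨(σl, GS.R s t'), GEdge.matchA' h1 h2 ht', hMt⟩
            | false =>
              by_cases hF : σl ∈ F
              · exact ⟨(m, GS.R s s'), GEdge.mask hF, ih.1 hF⟩
              · obtain ⟨h2, t, ht, hMt⟩ := ih.2 hF
                exact ⟨(σl, GS.R t s'), GEdge.matchA hF h2 ht, hMt⟩
          rw [hnext]
          exact vMove_inv A A' F m (GInv A A' F m M) e₀ hex
        | err =>
          rw [hρn] at ih
          exact ih.elim
    intro n hn
    have := key n
    rw [hn] at this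
    exact this
end

section
/- The masking distance δ_m(A, A') equals 0 if and only if A ≼_m A' (there exists a strong masking simulation from A to A'). -/
section MaskingProof

open Classical

variable {S S' L : Type}

private def gsEmb : GS S S' L → (Unit ⊕ S × S') ⊕ (S × L × Bool × S')
  | .R s s' => Sum.inl (Sum.inr (s, s'))
  | .err => Sum.inl (Sum.inl ())
  | .V s l b s' => Sum.inr (s, l, b, s')

instance instFiniteGS [Finite S] [Finite S'] [Finite L] : Finite (GS S S' L) :=
  Finite.of_injective gsEmb (by
    intro a b h
    cases a <;> cases b <;> simp [gsEmb] at h <;> try rfl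
    · exact congrArg₂ _ h.1 h.2
    · obtain ⟨h1, h2, h3, h4⟩ := h; subst h1 h2 h3 h4; rfl)

variable (A : TS S L) (A' : TS S' L) (F : Set L) (m : L)

lemma gedge_src_ne_err {v l w} (h : GEdge A A' F m v l w) : v ≠ GS.err := by
  cases h <;> simp

lemma gedge_tgt_ne_err {v l w} (h : GEdge A A' F m v l w) : w ≠ GS.err := by
  cases h <;> simp

lemma fullEdge_err {l w} (h : fullEdge A A' F m GS.err l w) :
    w = GS.err ∧ l ∉ F := by
  rcases h with h | ⟨_, h1, _, h3⟩
  · exact absurd rfl (gedge_src_ne_err A A' F m h)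
  · exact ⟨h3, h1⟩

lemma edge_total (hσ : ∃ σ, σ ∉ F ∧ σ ≠ m) (v : GS S S' L) :
    ∃ p : L × GS S S' L, fullEdge A A' F m v p.1 p.2 := by
  by_cases h : ∃ l u, GEdge A A' F m v l u
  · obtain ⟨l, u, h⟩ := h
    exact ⟨(l, u), Or.inl h⟩
  · push_neg at h
    obtain ⟨σ, h1, h2⟩ := hσ
    exact ⟨(σ, GS.err), Or.inr ⟨h, h1, h2, rfl⟩⟩

end MaskingProof

section PayoffLemmas

open Classical Filter

variable {α L : Type} (F : Set L) (verr : α)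

noncomputable def pseq (ρ : ℕ → α) (σ : ℕ → L) (n : ℕ) : ℝ :=
  (if ρ (n+1) = verr then (1:ℝ) else 0) /
    (1 + ∑ i ∈ Finset.range (n+1), (if σ i ∈ F then (1:ℝ) else 0))

lemma payoff_eq (ρ : ℕ → α) (σ : ℕ → L) :
    payoff F verr ρ σ = limUnder atTop (pseq F verr ρ σ) := rfl

lemma payoff_of_no_err {ρ : ℕ → α} {σ : ℕ → L} (h : ∀ n, ρ (n+1) ≠ verr) :
    payoff F verr ρ σ = 0 := by
  have : pseq F verr ρ σ = fun _ => (0:ℝ) := by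
    funext n; simp [pseq, h n]
  rw [payoff_eq, this]
  exact Filter.Tendsto.limUnder_eq tendsto_const_nhds

lemma sum_ind_nonneg (σ : ℕ → L) (n : ℕ) :
    (0:ℝ) ≤ ∑ i ∈ Finset.range n, (if σ i ∈ F then (1:ℝ) else 0) :=
  Finset.sum_nonneg fun _ _ => by positivity

lemma sum_ind_le (σ : ℕ → L) (n : ℕ) :
    ∑ i ∈ Finset.range n, (if σ i ∈ F then (1:ℝ) else 0) ≤ n :=
  calc ∑ i ∈ Finset.range n, (if σ i ∈ F then (1:ℝ) else 0)
      ≤ ∑ _i ∈ Finset.range n, (1:ℝ) :=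
        Finset.sum_le_sum fun _ _ => by split <;> norm_num
    _ = n := by simp

lemma payoff_of_absorbed {ρ : ℕ → α} {σ : ℕ → L} (N : ℕ)
    (habs : ∀ k, N ≤ k → ρ k = verr) (hlab : ∀ k, N ≤ k → σ k ∉ F) :
    payoff F verr ρ σ =
      1 / (1 + ∑ i ∈ Finset.range N, (if σ i ∈ F then (1:ℝ) else 0)) := by
  rw [payoff_eq]
  apply Filter.Tendsto.limUnder_eq
  apply Tendsto.congr' (f₁ := fun _ =>
    1 / (1 + ∑ i ∈ Finset.range N, (if σ i ∈ F then (1:ℝ) else 0)))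
  · filter_upwards [eventually_ge_atTop N] with n hn
    have h1 : ρ (n+1) = verr := habs _ (by omega)
    have h2 : ∑ i ∈ Finset.range (n+1), (if σ i ∈ F then (1:ℝ) else 0)
        = ∑ i ∈ Finset.range N, (if σ i ∈ F then (1:ℝ) else 0) := by
      symm
      apply Finset.sum_subset (Finset.range_subset_range.2 (by omega))
      intro i hi hi'
      simp only [Finset.mem_range] at hi hi'
      simp [hlab i (by omega)]
    simp [pseq, h1, h2]
  · exact tendsto_const_nhds

lemma payoff_nonneg_of_cases {ρ : ℕ → α} {σ : ℕ → L}
    (h : (∀ n, ρ (n+1) ≠ verr) ∨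
      ∃ N, (∀ k, N ≤ k → ρ k = verr) ∧ (∀ k, N ≤ k → σ k ∉ F)) :
    0 ≤ payoff F verr ρ σ ∧ payoff F verr ρ σ ≤ 1 := by
  rcases h with h | ⟨N, h1, h2⟩
  · rw [payoff_of_no_err F verr h]; norm_num
  · rw [payoff_of_absorbed F verr N h1 h2]
    have hB := sum_ind_nonneg F σ N
    constructor
    · positivity
    · rw [div_le_one (by linarith)]; linarith

end PayoffLemmas

section PlayLemmas

open Classical Filter

variable {S S' L : Type} (A : TS S L) (A' : TS S' L) (F : Set L) (m : L)

lemma play_absorb {v0 ρ σl} (hp : IsPlay (fullEdge A A' F m) v0 ρ σl)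
    {N : ℕ} (hN : ρ N = GS.err) : ∀ k, N ≤ k → ρ k = GS.err := by
  intro k hk
  induction k with
  | zero =>
    have h0 : N = 0 := Nat.le_zero.mp hk
    rw [← h0]; exact hN
  | succ k ih =>
    rcases Nat.lt_or_ge N (k+1) with h | h
    · have hk' : ρ k = GS.err := ih (by omega)
      have := hp.2 k
      rw [hk'] at this
      exact (fullEdge_err A A' F m this).1
    · have : N = k + 1 := by omega
      rw [← this]; exact hN

lemma play_absorb_lab {v0 ρ σl} (hp : IsPlay (fullEdge A A' F m) v0 ρ σl)
    {N : ℕ} (hN : ρ N = GS.err) : ∀ k, N ≤ k → σl k ∉ F := by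
  intro k hk
  have hk' : ρ k = GS.err := play_absorb A A' F m hp hN k hk
  have := hp.2 k
  rw [hk'] at this
  exact (fullEdge_err A A' F m this).2

lemma play_cases {v0 ρ σl} (hp : IsPlay (fullEdge A A' F m) v0 ρ σl) :
    (∀ n, ρ (n+1) ≠ GS.err) ∨
      ∃ N, (∀ k, N ≤ k → ρ k = GS.err) ∧ (∀ k, N ≤ k → σl k ∉ F) := by
  by_cases h : ∃ n, ρ n = GS.err
  · obtain ⟨n, hn⟩ := h
    exact Or.inr ⟨n, play_absorb A A' F m hp hn, play_absorb_lab A A' F m hp hn⟩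
  · push_neg at h
    exact Or.inl fun n => h (n+1)

lemma play_payoff_bounds {v0 ρ σl} (hp : IsPlay (fullEdge A A' F m) v0 ρ σl) :
    0 ≤ payoff F GS.err ρ σl ∧ payoff F GS.err ρ σl ≤ 1 :=
  payoff_nonneg_of_cases F GS.err (play_cases A A' F m hp)

end PlayLemmas

section OutLemmas

variable {α L : Type}

lemma out_step (isRef : α → Bool) (πR πV : Strat α L) (v0 : α) (n : ℕ) :
    (outLb isRef πR πV v0 n, outSt isRef πR πV v0 (n+1)) =
      (if isRef (outSt isRef πR πV v0 n) then
        πR (outAux isRef πR πV v0 n).1 (outSt isRef πR πV v0 n)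
       else πV (outAux isRef πR πV v0 n).1 (outSt isRef πR πV v0 n)) := by
  by_cases h : isRef (outSt isRef πR πV v0 n) <;>
    simp [outLb, outSt, outAux, h] <;> rfl

lemma out_isPlay {S S' L : Type} (A : TS S L) (A' : TS S' L) (F : Set L) (m : L)
    (πR πV : Strat (GS S S' L) L)
    (hR : ∀ h v, isRefB v = true → fullEdge A A' F m v (πR h v).1 (πR h v).2)
    (hV : ∀ h v, isRefB v = false → fullEdge A A' F m v (πV h v).1 (πV h v).2)
    (v0 : GS S S' L) :
    IsPlay (fullEdge A A' F m) v0 (outSt isRefB πR πV v0) (outLb isRefB πR πV v0) := by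
  refine ⟨rfl, fun n => ?_⟩
  have hs := out_step isRefB πR πV v0 n
  by_cases h : isRefB (outSt isRefB πR πV v0 n) = true
  · rw [if_pos h] at hs
    have := hR (outAux isRefB πR πV v0 n).1 (outSt isRefB πR πV v0 n) h
    rw [← hs] at this
    exact this
  · rw [if_neg h] at hs
    have := hV (outAux isRefB πR πV v0 n).1 (outSt isRefB πR πV v0 n)
      (by simpa using h)
    rw [← hs] at this
    exact this

lemma out_memconf_left (isRef : α → Bool) (g : α → L × α) (πV : Strat α L) (v0 : α) :
    MemConf isRef true (fun v => g v)
      (outSt isRef (fun _ v => g v) πV v0) (outLb isRef (fun _ v => g v) πV v0) := by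
  intro n hn
  have hs := out_step isRef (fun _ v => g v) πV v0 n
  rw [if_pos hn] at hs
  exact hs

lemma out_memconf_right (isRef : α → Bool) (πR : Strat α L) (g : α → L × α) (v0 : α) :
    MemConf isRef false (fun v => g v)
      (outSt isRef πR (fun _ v => g v) v0) (outLb isRef πR (fun _ v => g v) v0) := by
  intro n hn
  have hs := out_step isRef πR (fun _ v => g v) v0 n
  rw [if_neg (by simp [hn])] at hs
  exact hs

end OutLemmas

set_option linter.unusedSectionVars false

section Attractor

open Classical

variable {S S' L : Type} [Finite S] [Finite S'] [Finite L]
variable (A : TS S L) (A' : TS S' L) (F : Set L) (m : L)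

def Attr : ℕ → Set (GS S S' L)
  | 0 => {GS.err}
  | n+1 => Attr n
      ∪ {v | isRefB v = true ∧ ∃ l w, fullEdge A A' F m v l w ∧ w ∈ Attr n}
      ∪ {v | isRefB v = false ∧ ∀ l w, fullEdge A A' F m v l w → w ∈ Attr n}

lemma attr_mono : Monotone (Attr A A' F m) :=
  monotone_nat_of_le_succ fun n => by
    intro v hv; exact Or.inl (Or.inl hv)

noncomputable def rk (v : GS S S' L) : ℕ := sInf {n | v ∈ Attr A A' F m n}

lemma mem_attr_rk {v : GS S S' L} {n : ℕ} (h : v ∈ Attr A A' F m n) :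
    v ∈ Attr A A' F m (rk A A' F m v) := by
  have hne : {k | v ∈ Attr A A' F m k}.Nonempty := ⟨n, h⟩
  exact Nat.sInf_mem hne

lemma rk_le {v : GS S S' L} {n : ℕ} (h : v ∈ Attr A A' F m n) :
    rk A A' F m v ≤ n := Nat.sInf_le h

lemma not_mem_attr_lt_rk {v : GS S S' L} {n : ℕ} (h : n < rk A A' F m v) :
    v ∉ Attr A A' F m n := Nat.notMem_of_lt_sInf h

lemma attr_zero_iff {v : GS S S' L} : v ∈ Attr A A' F m 0 ↔ v = GS.err :=
  Set.mem_singleton_iff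

/-- Successors of a node not in any attractor set. -/
lemma not_attr_refuter {v : GS S S' L} (hv : isRefB v = true)
    (h : ∀ n, v ∉ Attr A A' F m n) :
    ∀ l w, fullEdge A A' F m v l w → ∀ n, w ∉ Attr A A' F m n := by
  intro l w he n hw
  exact h (n+1) (Or.inl (Or.inr ⟨hv, l, w, he, hw⟩))

lemma not_attr_verifier {v : GS S S' L} (hv : isRefB v = false)
    (h : ∀ n, v ∉ Attr A A' F m n) :
    ∃ l w, fullEdge A A' F m v l w ∧ ∀ n, w ∉ Attr A A' F m n := by
  by_contra hc
  push_neg at hc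
  -- every successor is in some attractor set
  set T : Set (GS S S' L) := {w | ∃ l, fullEdge A A' F m v l w} with hT
  have hfin : T.Finite := Set.toFinite T
  set N : ℕ := hfin.toFinset.sup (rk A A' F m) with hN
  apply h (N+1)
  refine Or.inr ⟨hv, ?_⟩
  intro l w he
  obtain ⟨n, hn⟩ := hc l w he
  have h1 : w ∈ Attr A A' F m (rk A A' F m w) := mem_attr_rk A A' F m hn
  have h2 : rk A A' F m w ≤ N :=
    Finset.le_sup (hfin.mem_toFinset.2 ⟨l, he⟩)
  exact attr_mono A A' F m h2 h1

end Attractor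

section SimFromAttr

open Classical

variable {S S' L : Type} [Finite S] [Finite S'] [Finite L]
variable (A : TS S L) (A' : TS S' L) (F : Set L) (m : L)

lemma sim_of_not_attr (hm : m ∉ F)
    (hSA : ∀ s e t, A.step s e t → e ∉ F ∧ e ≠ m)
    (hSA' : ∀ s' e t', A'.step s' e t' → e ≠ m)
    (h0 : ∀ n, GS.R A.init A'.init ∉ Attr A A' F m n) :
    IsMaskingSim A A' F (fun s s' => ∀ n, GS.R s s' ∉ Attr A A' F m n) := by
  refine ⟨h0, ?_⟩
  intro s s' hM
  have hsucc := not_attr_refuter A A' F m (v := GS.R s s') rfl hM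
  refine ⟨?_, ?_, ?_⟩
  · -- condition 1
    intro e he t hstep
    have hem : e ≠ m := (hSA s e t hstep).2
    have hV : ∀ n, (GS.V t e true s' : GS S S' L) ∉ Attr A A' F m n :=
      hsucc e _ (Or.inl (GEdge.chA he hem hstep)) 
    obtain ⟨l, w, hw, hwn⟩ :=
      not_attr_verifier A A' F m (v := GS.V t e true s') rfl hV
    rcases hw with hw | ⟨_, _, _, hwe⟩
    · cases hw with
      | matchA' h1 h2 h3 => exact ⟨_, h3, hwn⟩
    · subst hwe; exact absurd rfl (hwn 0)
  · -- condition 2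
    intro e he t' hstep
    have hem : e ≠ m := hSA' s' e t' hstep
    have hV : ∀ n, (GS.V s e false t' : GS S S' L) ∉ Attr A A' F m n :=
      hsucc e _ (Or.inl (GEdge.chA' hem hstep))
    obtain ⟨l, w, hw, hwn⟩ :=
      not_attr_verifier A A' F m (v := GS.V s e false t') rfl hV
    rcases hw with hw | ⟨_, _, _, hwe⟩
    · cases hw with
      | matchA h1 h2 h3 => exact ⟨_, h3, hwn⟩
      | mask h1 => exact absurd h1 he
    · subst hwe; exact absurd rfl (hwn 0)
  · -- condition 3
    intro f hf t' hstep
    have hfm : f ≠ m := fun h => hm (h ▸ hf)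
    have hV : ∀ n, (GS.V s f false t' : GS S S' L) ∉ Attr A A' F m n :=
      hsucc f _ (Or.inl (GEdge.chA' hfm hstep))
    obtain ⟨l, w, hw, hwn⟩ :=
      not_attr_verifier A A' F m (v := GS.V s f false t') rfl hV
    rcases hw with hw | ⟨_, _, _, hwe⟩
    · cases hw with
      | matchA h1 h2 h3 => exact absurd hf h1
      | mask h1 => exact ⟨s, rfl, hwn⟩
    · subst hwe; exact absurd rfl (hwn 0)

end SimFromAttr

section RefuterWin

open Classical

variable {S S' L : Type} [Finite S] [Finite S'] [Finite L]
variable (A : TS S L) (A' : TS S' L) (F : Set L) (m : L)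

noncomputable def gR (hσ : ∃ σ, σ ∉ F ∧ σ ≠ m) : GS S S' L → L × GS S S' L :=
  fun v =>
    if h : ∃ p : L × GS S S' L, fullEdge A A' F m v p.1 p.2 ∧
        p.2 ∈ Attr A A' F m (rk A A' F m v - 1)
    then h.choose else (edge_total A A' F m hσ v).choose

lemma gR_valid (hσ : ∃ σ, σ ∉ F ∧ σ ≠ m) (v : GS S S' L) :
    fullEdge A A' F m v (gR A A' F m hσ v).1 (gR A A' F m hσ v).2 := by
  unfold gR
  split
  next h => exact h.choose_spec.1
  next => exact (edge_total A A' F m hσ v).choose_spec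

lemma reach_err (hσ : ∃ σ, σ ∉ F ∧ σ ≠ m) {v0 ρ σl}
    (hp : IsPlay (fullEdge A A' F m) v0 ρ σl)
    (hc : MemConf isRefB true (gR A A' F m hσ) ρ σl)
    {N : ℕ} (h0 : v0 ∈ Attr A A' F m N) :
    ∃ j ≤ N, ρ j = GS.err := by
  have key : ∀ k, k ≤ N → (∃ j ≤ k, ρ j = GS.err) ∨ ρ k ∈ Attr A A' F m (N - k) := by
    intro k
    induction k with
    | zero => intro _; right; rw [hp.1]; simpa using h0
    | succ k ih =>
      intro hkN
      rcases ih (by omega) with ⟨j, hj, hje⟩ | hk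
      · exact Or.inl ⟨j, by omega, hje⟩
      by_cases herr : ρ k = GS.err
      · exact Or.inl ⟨k, by omega, herr⟩
      have hrk1 : 1 ≤ rk A A' F m (ρ k) := by
        rcases Nat.eq_zero_or_pos (rk A A' F m (ρ k)) with h | h
        · exfalso; apply herr
          have hmem := mem_attr_rk A A' F m hk
          rw [h] at hmem
          exact hmem
        · exact h
      have hrle : rk A A' F m (ρ k) ≤ N - k := rk_le A A' F m hk
      have hmem : ρ k ∈ Attr A A' F m (rk A A' F m (ρ k)) := mem_attr_rk A A' F m hk
      have hnot : ρ k ∉ Attr A A' F m (rk A A' F m (ρ k) - 1) :=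
        not_mem_attr_lt_rk A A' F m (by omega)
      obtain ⟨r', hr'⟩ : ∃ r', rk A A' F m (ρ k) = r' + 1 :=
        ⟨rk A A' F m (ρ k) - 1, by omega⟩
      rw [hr'] at hmem
      have hr'eq : rk A A' F m (ρ k) - 1 = r' := by omega
      rcases hmem with (hmem | ⟨hisR, l, w, he, hw⟩) | ⟨hisV, hall⟩
      · exact absurd hmem (hr'eq ▸ hnot)
      · -- refuter node, conformance to gR
        have hconf := hc k hisR
        have hdef : ∃ p : L × GS S S' L, fullEdge A A' F m (ρ k) p.1 p.2 ∧
            p.2 ∈ Attr A A' F m (rk A A' F m (ρ k) - 1) :=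
          ⟨(l, w), he, by rw [hr'eq]; exact hw⟩
        have hg : gR A A' F m hσ (ρ k) = hdef.choose := dif_pos hdef
        rw [hg] at hconf
        have hρ : ρ (k+1) = hdef.choose.2 := congrArg Prod.snd hconf
        right
        rw [hρ]
        exact attr_mono A A' F m
          (show rk A A' F m (ρ k) - 1 ≤ N - (k+1) by omega) hdef.choose_spec.2
      · -- verifier node: every successor decreases
        right
        have hsucc := hall (σl k) (ρ (k+1)) (hp.2 k)
        exact attr_mono A A' F m (show r' ≤ N - (k+1) by omega) hsucc
  rcases key N le_rfl with ⟨j, hj, hje⟩ | hN0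
  · exact ⟨j, hj, hje⟩
  · refine ⟨N, le_rfl, ?_⟩
    rw [Nat.sub_self] at hN0
    exact hN0

end RefuterWin

section VerifierWin

open Classical

variable {S S' L : Type}
variable (A : TS S L) (A' : TS S' L) (F : Set L) (m : L) (M : S → S' → Prop)

def Good : GS S S' L → Prop
  | .R s s' => M s s'
  | .V t σ true s' => σ ∉ F ∧ σ ≠ m ∧ ∃ t', A'.step s' σ t' ∧ M t t'
  | .V s σ false t' => σ ≠ m ∧
      ((σ ∈ F ∧ M s t') ∨ (σ ∉ F ∧ ∃ u, A.step s σ u ∧ M u t'))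
  | .err => False

lemma goodR_step (hsim : IsMaskingSim A A' F M)
    (hA : ∀ s, ∃ e t, A.step s e t)
    (hSA : ∀ s e t, A.step s e t → e ∉ F ∧ e ≠ m)
    {v l w} (hv : isRefB v = true) (hg : Good A A' F m M v)
    (he : fullEdge A A' F m v l w) : Good A A' F m M w := by
  cases v with
  | err => exact absurd hg (by simp [Good])
  | V s σ b s' => simp [isRefB] at hv
  | R s s' =>
    have hMs : M s s' := hg
    obtain ⟨h1, h2, h3⟩ := hsim.2 s s' hMs
    rcases he with he | ⟨hnb, _, _, hwe⟩
    · cases he with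
      | chA hσF hσm hstep =>
        obtain ⟨t', hst', hM⟩ := h1 _ hσF _ hstep
        exact ⟨hσF, hσm, t', hst', hM⟩
      | chA' hσm hstep =>
        rename_i t'
        refine ⟨hσm, ?_⟩
        by_cases hσF : l ∈ F
        · obtain ⟨t, ht, hM⟩ := h3 _ hσF _ hstep
          exact Or.inl ⟨hσF, ht ▸ hM⟩
        · obtain ⟨u, hstep', hM⟩ := h2 _ hσF _ hstep
          exact Or.inr ⟨hσF, u, hstep', hM⟩
    · exfalso
      obtain ⟨e, t, hstep⟩ := hA s
      obtain ⟨heF, hem⟩ := hSA s e t hstep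
      exact hnb e _ (GEdge.chA heF hem hstep)

lemma goodV_step {v} (hv : isRefB v = false) (hg : Good A A' F m M v) :
    ∃ p : L × GS S S' L, fullEdge A A' F m v p.1 p.2 ∧ Good A A' F m M p.2 := by
  cases v with
  | R s s' => simp [isRefB] at hv
  | err => simp [isRefB] at hv
  | V s σ b s' =>
    cases b with
    | true =>
      obtain ⟨hσF, hσm, t', hst', hM⟩ := hg
      exact ⟨(σ, GS.R s t'), Or.inl (GEdge.matchA' hσF hσm hst'), hM⟩
    | false =>
      obtain ⟨hσm, hg⟩ := hg
      rcases hg with ⟨hσF, hM⟩ | ⟨hσF, u, hstep, hM⟩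
      · exact ⟨(m, GS.R s s'), Or.inl (GEdge.mask hσF), hM⟩
      · exact ⟨(σ, GS.R u s'), Or.inl (GEdge.matchA hσF hσm hstep), hM⟩

noncomputable def gV (hσ : ∃ σ, σ ∉ F ∧ σ ≠ m) : GS S S' L → L × GS S S' L :=
  fun v =>
    if h : ∃ p : L × GS S S' L, fullEdge A A' F m v p.1 p.2 ∧ Good A A' F m M p.2
    then h.choose else (edge_total A A' F m hσ v).choose

lemma gV_valid (hσ : ∃ σ, σ ∉ F ∧ σ ≠ m) (v : GS S S' L) :
    fullEdge A A' F m v (gV A A' F m M hσ v).1 (gV A A' F m M hσ v).2 := by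
  unfold gV
  split
  next h => exact h.choose_spec.1
  next => exact (edge_total A A' F m hσ v).choose_spec

lemma good_invariant (hsim : IsMaskingSim A A' F M)
    (hA : ∀ s, ∃ e t, A.step s e t)
    (hSA : ∀ s e t, A.step s e t → e ∉ F ∧ e ≠ m)
    (hσ : ∃ σ, σ ∉ F ∧ σ ≠ m) {v0 ρ σl}
    (hp : IsPlay (fullEdge A A' F m) v0 ρ σl)
    (hc : MemConf isRefB false (gV A A' F m M hσ) ρ σl)
    (h0 : Good A A' F m M v0) : ∀ n, Good A A' F m M (ρ n) := by
  intro n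
  induction n with
  | zero => rw [hp.1]; exact h0
  | succ n ih =>
    by_cases h : isRefB (ρ n) = true
    · exact goodR_step A A' F m M hsim hA hSA h ih (hp.2 n)
    · have hc' := hc n (by simpa using h)
      have hex := goodV_step A A' F m M (v := ρ n) (by simpa using h) ih
      have hg : gV A A' F m M hσ (ρ n) = hex.choose := dif_pos hex
      rw [hg] at hc'
      have hρ : ρ (n+1) = hex.choose.2 := congrArg Prod.snd hc'
      rw [hρ]
      exact hex.choose_spec.2

end VerifierWin

/-- the masking distance `δ_m(A, A')` is `0` iff `A ≼_m A'`,
i.e. iff there is a strong masking simulation from `A` to `A'`. -/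
theorem masking_distance_zero_iff_sim {S S' L : Type}
    [Finite S] [Finite S'] [Finite L]
    (A : TS S L) (A' : TS S' L) (F : Set L) (m : L) (hm : m ∉ F)
    (hA : ∀ s, ∃ e t, A.step s e t)
    (hA' : ∀ s', ∃ e t', A'.step s' e t')
    (hSA : ∀ s e t, A.step s e t → e ∉ F ∧ e ≠ m)
    (hSA' : ∀ s' e t', A'.step s' e t' → e ≠ m) :
    maskingValue A A' F m = 0 ↔ ∃ M : S → S' → Prop, IsMaskingSim A A' F M := by
  classical
  have hσex : ∃ σ, σ ∉ F ∧ σ ≠ m := by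
    obtain ⟨e, t, h⟩ := hA A.init
    exact ⟨e, (hSA _ _ _ h).1, (hSA _ _ _ h).2⟩
  haveI hRne : Nonempty (RStrat A A' F m) :=
    ⟨⟨fun _ v => (edge_total A A' F m hσex v).choose,
      fun _ v _ => (edge_total A A' F m hσex v).choose_spec⟩⟩
  haveI hVne : Nonempty (VStrat A A' F m) :=
    ⟨⟨fun _ v => (edge_total A A' F m hσex v).choose,
      fun _ v _ => (edge_total A A' F m hσex v).choose_spec⟩⟩
  have hplay : ∀ (πR : RStrat A A' F m) (πV : VStrat A A' F m),
      IsPlay (fullEdge A A' F m) (GS.R A.init A'.init)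
        (outSt isRefB πR.1 πV.1 (GS.R A.init A'.init))
        (outLb isRefB πR.1 πV.1 (GS.R A.init A'.init)) :=
    fun πR πV => out_isPlay A A' F m πR.1 πV.1 πR.2 πV.2 _
  have hbounds : ∀ (πR : RStrat A A' F m) (πV : VStrat A A' F m),
      0 ≤ payoff F GS.err (outSt isRefB πR.1 πV.1 (GS.R A.init A'.init))
          (outLb isRefB πR.1 πV.1 (GS.R A.init A'.init)) ∧
      payoff F GS.err (outSt isRefB πR.1 πV.1 (GS.R A.init A'.init))
          (outLb isRefB πR.1 πV.1 (GS.R A.init A'.init)) ≤ 1 :=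
    fun πR πV => play_payoff_bounds A A' F m (hplay πR πV)
  have hbddB : ∀ πR : RStrat A A' F m, BddBelow (Set.range fun πV : VStrat A A' F m =>
      payoff F GS.err (outSt isRefB πR.1 πV.1 (GS.R A.init A'.init))
        (outLb isRefB πR.1 πV.1 (GS.R A.init A'.init))) := by
    intro πR
    refine ⟨0, ?_⟩
    rintro x ⟨πV, rfl⟩
    exact (hbounds πR πV).1
  constructor
  · intro hval
    by_cases hattr : ∃ N, (GS.R A.init A'.init : GS S S' L) ∈ Attr A A' F m N
    · exfalso
      obtain ⟨N, hN⟩ := hattr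
      set πR : RStrat A A' F m :=
        ⟨fun _ v => gR A A' F m hσex v, fun _ v _ => gR_valid A A' F m hσex v⟩ with hπR
      have hlow : ∀ πV : VStrat A A' F m,
          1 / (1 + (N:ℝ)) ≤ payoff F GS.err
            (outSt isRefB πR.1 πV.1 (GS.R A.init A'.init))
            (outLb isRefB πR.1 πV.1 (GS.R A.init A'.init)) := by
        intro πV
        have hp := hplay πR πV
        have hc : MemConf isRefB true (gR A A' F m hσex)
            (outSt isRefB πR.1 πV.1 (GS.R A.init A'.init))
            (outLb isRefB πR.1 πV.1 (GS.R A.init A'.init)) :=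
          out_memconf_left isRefB (gR A A' F m hσex) πV.1 _
        obtain ⟨j, hj, hje⟩ := reach_err A A' F m hσex hp hc hN
        have habs := play_absorb A A' F m hp hje
        have hlab := play_absorb_lab A A' F m hp hje
        rw [payoff_of_absorbed F GS.err j habs hlab]
        have hB1 := sum_ind_nonneg F (outLb isRefB πR.1 πV.1 (GS.R A.init A'.init)) j
        have hB2 := sum_ind_le F (outLb isRefB πR.1 πV.1 (GS.R A.init A'.init)) j
        have hjN : (j:ℝ) ≤ (N:ℝ) := Nat.cast_le.2 hj
        exact one_div_le_one_div_of_le (by linarith) (by linarith)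
      have h1 : 1 / (1 + (N:ℝ)) ≤ ⨅ πV : VStrat A A' F m,
          payoff F GS.err (outSt isRefB πR.1 πV.1 (GS.R A.init A'.init))
            (outLb isRefB πR.1 πV.1 (GS.R A.init A'.init)) := le_ciInf hlow
      have h2 : (⨅ πV : VStrat A A' F m,
          payoff F GS.err (outSt isRefB πR.1 πV.1 (GS.R A.init A'.init))
            (outLb isRefB πR.1 πV.1 (GS.R A.init A'.init))) ≤ maskingValue A A' F m := by
        unfold maskingValue
        apply le_ciSup (f := fun πR' : RStrat A A' F m => ⨅ πV : VStrat A A' F m,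
          payoff F GS.err (outSt isRefB πR'.1 πV.1 (GS.R A.init A'.init))
            (outLb isRefB πR'.1 πV.1 (GS.R A.init A'.init)))
        refine ⟨1, ?_⟩
        rintro x ⟨πR', rfl⟩
        obtain ⟨πV0⟩ := hVne
        exact le_trans (ciInf_le (hbddB πR') πV0) (hbounds πR' πV0).2
      have hpos : (0:ℝ) < 1 / (1 + (N:ℝ)) := by positivity
      rw [hval] at h2
      linarith
    · push_neg at hattr
      exact ⟨_, sim_of_not_attr A A' F m hm hSA hSA' hattr⟩
  · rintro ⟨M, hsim⟩
    have hinner : ∀ πR : RStrat A A' F m,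
        (⨅ πV : VStrat A A' F m,
          payoff F GS.err (outSt isRefB πR.1 πV.1 (GS.R A.init A'.init))
            (outLb isRefB πR.1 πV.1 (GS.R A.init A'.init))) = 0 := by
      intro πR
      let hVgood : VStrat A A' F m :=
        ⟨fun _ v => gV A A' F m M hσex v, fun _ v _ => gV_valid A A' F m M hσex v⟩
      have hp := hplay πR hVgood
      have hc : MemConf isRefB false (gV A A' F m M hσex)
          (outSt isRefB πR.1 hVgood.1 (GS.R A.init A'.init))
          (outLb isRefB πR.1 hVgood.1 (GS.R A.init A'.init)) :=
        out_memconf_right isRefB πR.1 (gV A A' F m M hσex) _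
      have hgood := good_invariant A A' F m M hsim hA hSA hσex hp hc
        (show Good A A' F m M (GS.R A.init A'.init) from hsim.1)
      have hzero : payoff F GS.err
          (outSt isRefB πR.1 hVgood.1 (GS.R A.init A'.init))
          (outLb isRefB πR.1 hVgood.1 (GS.R A.init A'.init)) = 0 := by
        apply payoff_of_no_err
        intro n h
        have hg := hgood (n+1)
        rw [h] at hg
        exact hg
      apply le_antisymm
      · exact le_trans (ciInf_le (hbddB πR) hVgood) (le_of_eq hzero)
      · exact le_ciInf fun πV' => (hbounds πR πV').1
    calc maskingValue A A' F m
        = ⨆ _πR : RStrat A A' F m, (0:ℝ) := by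
          unfold maskingValue; exact iSup_congr hinner
      _ = 0 := ciSup_const
end
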